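/- Fix ε ∈ (0,1) and let B be a ball contained in Ω = [ε,1]². There exist constants c₁, c₂ > 0 depending only on ε (one may take c₁ = 1/(4π) and c₂ = 40/(επ)) such that for all (a,b) ∈ ℤ_{≥0}² with a + b > 0 and h_{a,b} sufficiently large, c₁ |B| ψ(h_{a,b})/h_{a,b} ≤ |σ_{a,b} ∩ B| ≤ c₂ |B| ψ(h_{a,b})/h_{a,b}. -/

import Mathlib

open MeasureTheory Filter Set

/-- The set `σ_{a,b}(c) = {(x,y) ∈ [0,1]² : |a²x + b²y − c²| < ψ(h_{a,b})}`,
where `h_{a,b} = max(a,b)`. -/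
def sigC (ψ : ℝ → ℝ) (a b c : ℕ) : Set (EuclideanSpace ℝ (Fin 2)) :=
  {p | p 0 ∈ Set.Icc (0 : ℝ) 1 ∧ p 1 ∈ Set.Icc (0 : ℝ) 1 ∧
    |(a : ℝ) ^ 2 * p 0 + (b : ℝ) ^ 2 * p 1 - (c : ℝ) ^ 2| < ψ ((max a b : ℕ) : ℝ)}

/-- The set `σ_{a,b} = ⋃_{c ∈ ℤ_{≥0}} σ_{a,b}(c)`. -/
def sigU (ψ : ℝ → ℝ) (a b : ℕ) : Set (EuclideanSpace ℝ (Fin 2)) :=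
  ⋃ c : ℕ, sigC ψ a b c

/-- The square `Ω = [ε,1]²`. -/
def unitSq (ε : ℝ) : Set (EuclideanSpace ℝ (Fin 2)) :=
  {p | p 0 ∈ Set.Icc ε 1 ∧ p 1 ∈ Set.Icc ε 1}

open scoped ENNReal

set_option maxHeartbeats 1000000

/-- membership of the strip as an interval -/
lemma mem_J_iff' {β t ψh q y : ℝ} (hβ : 0 < β) :
    |t + β * y - q| < ψh ↔ y ∈ Ioo ((q - t - ψh)/β) ((q - t + ψh)/β) := by
  rw [abs_lt, mem_Ioo, div_lt_iff₀ hβ, lt_div_iff₀ hβ]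
  constructor <;> rintro ⟨h1, h2⟩ <;> constructor <;> nlinarith [mul_comm y β]

lemma oneD_upper (b : ℕ) (ε t ψh y₁ r : ℝ)
    (hε0 : 0 < ε) (hε1 : ε ≤ 1)
    (ht0 : 0 ≤ t) (hψ0 : 0 < ψh) (hψ1 : ψh ≤ 1)
    (hy1 : ε ≤ y₁ - r) (hr : 0 < r) (hr2 : r ≤ 1/2)
    (hb1 : 2 ≤ (b:ℝ) * ε * r) (hb2 : 36 / r ≤ (b:ℝ)) :
    volume ((⋃ c : ℕ, Ioo (((c:ℝ)^2 - t - ψh)/(b:ℝ)^2) (((c:ℝ)^2 - t + ψh)/(b:ℝ)^2))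
        ∩ Ioo (y₁ - r) (y₁ + r)) ≤ ENNReal.ofReal (8*r*ψh/(ε*(b:ℝ))) := by
  have hB0 : (0:ℝ) < (b:ℝ) := lt_of_lt_of_le (by positivity) hb2
  have hrb : 36 ≤ r * (b:ℝ) := by rw [div_le_iff₀ hr] at hb2; linarith
  have hεb : 4 ≤ ε * (b:ℝ) := by
    have h1 : 2/r ≤ ε * (b:ℝ) := by rw [div_le_iff₀ hr]; nlinarith
    have h2 : (4:ℝ) ≤ 2/r := by rw [le_div_iff₀ hr]; linarith
    linarith
  have hB4 : (4:ℝ) ≤ (b:ℝ) := by nlinarith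
  have hβ0 : (0:ℝ) < (b:ℝ)^2 := by positivity
  have hεβ : 2 ≤ ε * (b:ℝ)^2 := by nlinarith
  have hu2 : ε*(b:ℝ)^2/2 ≤ t + (b:ℝ)^2*(y₁ - r) - ψh := by nlinarith
  have hu0 : (0:ℝ) < t + (b:ℝ)^2*(y₁ - r) - ψh := lt_of_lt_of_le (by positivity) hu2
  have huv : t + (b:ℝ)^2*(y₁ - r) - ψh ≤ t + (b:ℝ)^2*(y₁ + r) + ψh := by nlinarith
  have hv0 : (0:ℝ) ≤ t + (b:ℝ)^2*(y₁ + r) + ψh := le_trans hu0.le huv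
  obtain ⟨s, hs⟩ : ∃ x : ℝ, Real.sqrt (t + (b:ℝ)^2*(y₁ - r) - ψh) = x := ⟨_, rfl⟩
  obtain ⟨S, hS'⟩ : ∃ x : ℝ, Real.sqrt (t + (b:ℝ)^2*(y₁ + r) + ψh) = x := ⟨_, rfl⟩
  have hs2 : s^2 = t + (b:ℝ)^2*(y₁ - r) - ψh := by rw [← hs]; exact Real.sq_sqrt hu0.le
  have hS2 : S^2 = t + (b:ℝ)^2*(y₁ + r) + ψh := by rw [← hS']; exact Real.sq_sqrt hv0
  have hs0 : 0 ≤ s := by rw [← hs]; exact Real.sqrt_nonneg _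
  have hsS : s ≤ S := by rw [← hs, ← hS']; exact Real.sqrt_le_sqrt huv
  have hs_lb : ε*(b:ℝ)/2 ≤ s := by
    rw [← hs, Real.le_sqrt (by positivity) hu0.le]; nlinarith
  have hempty : ∀ c : ℕ, c ∉ Finset.Icc (⌊s⌋₊ + 1) ⌊S⌋₊ →
      Ioo (((c:ℝ)^2 - t - ψh)/(b:ℝ)^2) (((c:ℝ)^2 - t + ψh)/(b:ℝ)^2) ∩ Ioo (y₁ - r) (y₁ + r) = ∅ := by
    intro c hc
    rw [eq_empty_iff_forall_notMem]
    rintro y ⟨hy1', hy2'⟩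
    apply hc
    have h1 : |t + (b:ℝ)^2*y - (c:ℝ)^2| < ψh := (mem_J_iff' hβ0).2 hy1'
    rw [abs_lt] at h1
    obtain ⟨hyl, hyr⟩ := mem_Ioo.1 hy2'
    have hmul1 : (b:ℝ)^2*(y₁-r) ≤ (b:ℝ)^2*y := by nlinarith
    have hmul2 : (b:ℝ)^2*y ≤ (b:ℝ)^2*(y₁+r) := by nlinarith
    have hcu : t + (b:ℝ)^2*(y₁ - r) - ψh < (c:ℝ)^2 := by nlinarith
    have hcv : (c:ℝ)^2 < t + (b:ℝ)^2*(y₁ + r) + ψh := by nlinarith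
    have hcn : c ≠ 0 := by rintro rfl; push_cast at hcu; nlinarith
    have hc0 : (0:ℝ) < (c:ℝ) := by exact_mod_cast Nat.pos_of_ne_zero hcn
    refine Finset.mem_Icc.2 ⟨?_, ?_⟩
    · have h2 : s < (c:ℝ) := by rw [← hs, Real.sqrt_lt' hc0]; exact hcu
      have h3 : (⌊s⌋₊ : ℝ) < (c:ℝ) := lt_of_le_of_lt (Nat.floor_le hs0) h2
      exact_mod_cast Nat.succ_le_of_lt (by exact_mod_cast h3)
    · exact Nat.le_floor (by rw [← hS', Real.le_sqrt (by positivity) hv0]; exact hcv.le)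
  rw [iUnion_inter]
  have hlen : ∀ c : ℕ, volume (Ioo (((c:ℝ)^2 - t - ψh)/(b:ℝ)^2) (((c:ℝ)^2 - t + ψh)/(b:ℝ)^2)
      ∩ Ioo (y₁ - r) (y₁ + r)) ≤ ENNReal.ofReal (2*ψh/(b:ℝ)^2) := by
    intro c
    refine le_trans (measure_mono inter_subset_left) ?_
    rw [Real.volume_Ioo]
    apply ENNReal.ofReal_le_ofReal
    rw [div_sub_div_same, div_le_div_iff_of_pos_right hβ0]
    ring_nf
    exact le_refl _
  calc volume (⋃ c : ℕ, Ioo (((c:ℝ)^2 - t - ψh)/(b:ℝ)^2) (((c:ℝ)^2 - t + ψh)/(b:ℝ)^2)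
        ∩ Ioo (y₁ - r) (y₁ + r))
      ≤ ∑' c : ℕ, volume (Ioo (((c:ℝ)^2 - t - ψh)/(b:ℝ)^2) (((c:ℝ)^2 - t + ψh)/(b:ℝ)^2)
        ∩ Ioo (y₁ - r) (y₁ + r)) := measure_iUnion_le _
    _ = ∑ c ∈ Finset.Icc (⌊s⌋₊ + 1) ⌊S⌋₊, volume (Ioo (((c:ℝ)^2 - t - ψh)/(b:ℝ)^2)
          (((c:ℝ)^2 - t + ψh)/(b:ℝ)^2) ∩ Ioo (y₁ - r) (y₁ + r)) :=
        tsum_eq_sum (fun c hc => by rw [hempty c hc]; exact measure_empty)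
    _ ≤ ∑ _c ∈ Finset.Icc (⌊s⌋₊ + 1) ⌊S⌋₊, ENNReal.ofReal (2*ψh/(b:ℝ)^2) :=
        Finset.sum_le_sum (fun c _ => hlen c)
    _ = (Finset.Icc (⌊s⌋₊ + 1) ⌊S⌋₊).card • ENNReal.ofReal (2*ψh/(b:ℝ)^2) := by
        rw [Finset.sum_const]
    _ ≤ ENNReal.ofReal (8*r*ψh/(ε*(b:ℝ))) := ?_
  rw [nsmul_eq_mul, ← ENNReal.ofReal_natCast, ← ENNReal.ofReal_mul (by positivity)]
  apply ENNReal.ofReal_le_ofReal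
  have hcard : ((Finset.Icc (⌊s⌋₊ + 1) ⌊S⌋₊).card : ℝ) ≤ S - s + 1 := by
    by_cases hmn : ⌊s⌋₊ + 1 ≤ ⌊S⌋₊
    · rw [Nat.card_Icc]
      have h3 : (⌊S⌋₊ + 1 - (⌊s⌋₊+1) : ℕ) = ⌊S⌋₊ - ⌊s⌋₊ := by omega
      rw [h3, Nat.cast_sub (by omega)]
      have h4 : (⌊S⌋₊:ℝ) ≤ S := Nat.floor_le (hs0.trans hsS)
      have h5 : s < ⌊s⌋₊ + 1 := Nat.lt_floor_add_one s
      push_cast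
      linarith
    · rw [Finset.Icc_eq_empty hmn]
      simp only [Finset.card_empty, Nat.cast_zero]
      linarith
  have hstep : S - s ≤ (2*(b:ℝ)^2*r + 2*ψh) / (2*s) := by
    rw [le_div_iff₀ (by nlinarith)]
    nlinarith
  have hstep2 : (2*(b:ℝ)^2*r + 2*ψh) / (2*s) ≤ (2*(b:ℝ)^2*r + 2) / (ε*(b:ℝ)) := by
    apply div_le_div₀ (by positivity) (by nlinarith) (by positivity) (by nlinarith)
  have hkey : ((Finset.Icc (⌊s⌋₊ + 1) ⌊S⌋₊).card : ℝ) ≤ (2*(b:ℝ)^2*r + 2) / (ε*(b:ℝ)) + 1 :=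
    by linarith
  calc ((Finset.Icc (⌊s⌋₊ + 1) ⌊S⌋₊).card : ℝ) * (2*ψh/(b:ℝ)^2)
      ≤ ((2*(b:ℝ)^2*r + 2) / (ε*(b:ℝ)) + 1) * (2*ψh/(b:ℝ)^2) :=
        mul_le_mul_of_nonneg_right hkey (by positivity)
    _ = ((2*(b:ℝ)^2*r + 2) + ε*(b:ℝ)) * (2*ψh) / (ε*(b:ℝ)*(b:ℝ)^2) := by
        field_simp
    _ ≤ (4*r*(b:ℝ)^2) * (2*ψh) / (ε*(b:ℝ)*(b:ℝ)^2) := by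
        gcongr
        nlinarith
    _ = 8*r*ψh/(ε*(b:ℝ)) := by field_simp; ring

lemma oneD_lower (b : ℕ) (ε t ψh y₁ r w : ℝ)
    (hε0 : 0 < ε) (hε1 : ε ≤ 1)
    (ht0 : 0 ≤ t) (htb : t ≤ (b:ℝ)^2)
    (hψ0 : 0 < ψh) (hψ1 : ψh ≤ 1)
    (hw1 : 5/6*r ≤ w) (hw2 : w ≤ r)
    (hy0 : 0 ≤ y₁ - w) (hy2 : y₁ + w ≤ 1)
    (hr : 0 < r) (hb2 : 36 / r ≤ (b:ℝ)) :
    ENNReal.ofReal (r*ψh/(b:ℝ)) ≤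
      volume ((⋃ c : ℕ, Ioo (((c:ℝ)^2 - t - ψh)/(b:ℝ)^2) (((c:ℝ)^2 - t + ψh)/(b:ℝ)^2))
        ∩ Ioo (y₁ - w) (y₁ + w)) := by
  have hB0 : (0:ℝ) < (b:ℝ) := lt_of_lt_of_le (by positivity) hb2
  have hβ0 : (0:ℝ) < (b:ℝ)^2 := by positivity
  have hrb : 36 ≤ r * (b:ℝ) := by rw [div_le_iff₀ hr] at hb2; linarith
  have hrhalf : r ≤ 3/5 := by nlinarith
  have hB1 : (36:ℝ) ≤ (b:ℝ) := by nlinarith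
  -- u' and v'
  have hu'0 : (0:ℝ) ≤ t + (b:ℝ)^2*(y₁ - w) + ψh := by nlinarith
  have hrb2 : 36*(b:ℝ) ≤ r*(b:ℝ)^2 := by nlinarith
  have hwB : 30 ≤ (b:ℝ)^2 * w := by nlinarith
  have hv'u' : t + (b:ℝ)^2*(y₁ - w) + ψh ≤ t + (b:ℝ)^2*(y₁ + w) - ψh := by nlinarith
  have hv'0 : (0:ℝ) ≤ t + (b:ℝ)^2*(y₁ + w) - ψh := le_trans hu'0 hv'u'
  have hv'2 : t + (b:ℝ)^2*(y₁ + w) - ψh ≤ 2*(b:ℝ)^2 := by nlinarith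
  obtain ⟨s, hs⟩ : ∃ x : ℝ, Real.sqrt (t + (b:ℝ)^2*(y₁ - w) + ψh) = x := ⟨_, rfl⟩
  obtain ⟨S, hS'⟩ : ∃ x : ℝ, Real.sqrt (t + (b:ℝ)^2*(y₁ + w) - ψh) = x := ⟨_, rfl⟩
  have hs2 : s^2 = t + (b:ℝ)^2*(y₁ - w) + ψh := by rw [← hs]; exact Real.sq_sqrt hu'0
  have hS2 : S^2 = t + (b:ℝ)^2*(y₁ + w) - ψh := by rw [← hS']; exact Real.sq_sqrt hv'0
  have hs0 : 0 ≤ s := by rw [← hs]; exact Real.sqrt_nonneg _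
  have hsS : s ≤ S := by rw [← hs, ← hS']; exact Real.sqrt_le_sqrt hv'u'
  have hS_ub : S ≤ 3/2*(b:ℝ) := by
    rw [← hS']
    have h0 : t + (b:ℝ)^2*(y₁ + w) - ψh ≤ (3/2*(b:ℝ))^2 := by nlinarith
    calc Real.sqrt (t + (b:ℝ)^2*(y₁ + w) - ψh) ≤ Real.sqrt ((3/2*(b:ℝ))^2) :=
          Real.sqrt_le_sqrt h0
      _ = 3/2*(b:ℝ) := Real.sqrt_sq (by positivity)
  have hS0 : 0 < S := by
    rw [← hS']; apply Real.sqrt_pos.2; nlinarith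
  -- members of K give intervals inside
  have hmem : ∀ c ∈ Finset.Icc (⌊s⌋₊ + 1) ⌊S⌋₊,
      Ioo (((c:ℝ)^2 - t - ψh)/(b:ℝ)^2) (((c:ℝ)^2 - t + ψh)/(b:ℝ)^2) ⊆
        (⋃ c : ℕ, Ioo (((c:ℝ)^2 - t - ψh)/(b:ℝ)^2) (((c:ℝ)^2 - t + ψh)/(b:ℝ)^2))
          ∩ Ioo (y₁ - w) (y₁ + w) := by
    intro c hc
    obtain ⟨hc1, hc2⟩ := Finset.mem_Icc.1 hc
    have hcs : s < (c:ℝ) := by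
      have h3 : (⌊s⌋₊:ℝ) + 1 ≤ (c:ℝ) := by exact_mod_cast hc1
      have h5 : s < (⌊s⌋₊:ℝ) + 1 := Nat.lt_floor_add_one s
      linarith
    have hcS : (c:ℝ) ≤ S := by
      have h3 : (c:ℝ) ≤ (⌊S⌋₊:ℝ) := by exact_mod_cast hc2
      exact h3.trans (Nat.floor_le (hs0.trans hsS))
    have hcu : t + (b:ℝ)^2*(y₁ - w) + ψh < (c:ℝ)^2 := by nlinarith
    have hcv : (c:ℝ)^2 ≤ t + (b:ℝ)^2*(y₁ + w) - ψh := by nlinarith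
    intro y hy
    refine ⟨mem_iUnion.2 ⟨c, hy⟩, ?_⟩
    obtain ⟨hyl, hyr⟩ := mem_Ioo.1 hy
    constructor
    · have h6 : y₁ - w < ((c:ℝ)^2 - t - ψh)/(b:ℝ)^2 := by
        rw [lt_div_iff₀ hβ0]; nlinarith
      linarith
    · have h7 : ((c:ℝ)^2 - t + ψh)/(b:ℝ)^2 ≤ y₁ + w := by
        rw [div_le_iff₀ hβ0]; nlinarith
      linarith
  -- disjointness
  have hdisj : (↑(Finset.Icc (⌊s⌋₊ + 1) ⌊S⌋₊) : Set ℕ).PairwiseDisjoint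
      (fun c : ℕ => Ioo (((c:ℝ)^2 - t - ψh)/(b:ℝ)^2) (((c:ℝ)^2 - t + ψh)/(b:ℝ)^2)) := by
    have key : ∀ i ∈ Finset.Icc (⌊s⌋₊ + 1) ⌊S⌋₊, ∀ j ∈ Finset.Icc (⌊s⌋₊ + 1) ⌊S⌋₊, i < j →
        Disjoint (Ioo (((i:ℝ)^2 - t - ψh)/(b:ℝ)^2) (((i:ℝ)^2 - t + ψh)/(b:ℝ)^2))
          (Ioo (((j:ℝ)^2 - t - ψh)/(b:ℝ)^2) (((j:ℝ)^2 - t + ψh)/(b:ℝ)^2)) := by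
      intro i hi j hj hij
      obtain ⟨hi1, _⟩ := Finset.mem_Icc.1 hi
      have hi1' : 1 ≤ i := by omega
      have hij' : (i:ℝ) + 1 ≤ (j:ℝ) := by exact_mod_cast hij
      have hi0 : (1:ℝ) ≤ (i:ℝ) := by exact_mod_cast hi1'
      apply Set.disjoint_left.2
      rintro y ⟨_, hy2⟩ ⟨hy3, _⟩
      have h8 : ((j:ℝ)^2 - t - ψh)/(b:ℝ)^2 < ((i:ℝ)^2 - t + ψh)/(b:ℝ)^2 := lt_trans hy3 hy2
      rw [div_lt_div_iff_of_pos_right hβ0] at h8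
      nlinarith
    intro i hi j hj hij
    rcases hij.lt_or_gt with h | h
    · exact key i hi j hj h
    · exact (key j hj i hi h).symm
  -- volume computation
  have hvol : ∀ c : ℕ, volume (Ioo (((c:ℝ)^2 - t - ψh)/(b:ℝ)^2) (((c:ℝ)^2 - t + ψh)/(b:ℝ)^2))
      = ENNReal.ofReal (2*ψh/(b:ℝ)^2) := by
    intro c
    rw [Real.volume_Ioo]
    congr 1
    field_simp
    ring
  have hbig : volume (⋃ c ∈ Finset.Icc (⌊s⌋₊ + 1) ⌊S⌋₊,
      Ioo (((c:ℝ)^2 - t - ψh)/(b:ℝ)^2) (((c:ℝ)^2 - t + ψh)/(b:ℝ)^2))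
      = ∑ c ∈ Finset.Icc (⌊s⌋₊ + 1) ⌊S⌋₊, volume
          (Ioo (((c:ℝ)^2 - t - ψh)/(b:ℝ)^2) (((c:ℝ)^2 - t + ψh)/(b:ℝ)^2)) :=
    measure_biUnion_finset hdisj (fun c _ => measurableSet_Ioo)
  -- card lower bound
  have hcard : S - s - 1 ≤ ((Finset.Icc (⌊s⌋₊ + 1) ⌊S⌋₊).card : ℝ) := by
    by_cases hmn : ⌊s⌋₊ + 1 ≤ ⌊S⌋₊
    · rw [Nat.card_Icc]
      have h3 : (⌊S⌋₊ + 1 - (⌊s⌋₊+1) : ℕ) = ⌊S⌋₊ - ⌊s⌋₊ := by omega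
      rw [h3, Nat.cast_sub (by omega)]
      have h4 : S < (⌊S⌋₊:ℝ) + 1 := Nat.lt_floor_add_one S
      have h5 : (⌊s⌋₊:ℝ) ≤ s := Nat.floor_le hs0
      linarith
    · exfalso
      apply hmn
      have h6 : s + 1 < S := by
        by_contra h7
        push_neg at h7
        have h8 : (t + (b:ℝ)^2*(y₁ + w) - ψh) - (t + (b:ℝ)^2*(y₁ - w) + ψh) = (S - s) * (S + s) := by
          linear_combination hs2 - hS2
        have h12 : (b:ℝ)^2*(5/6*r) ≤ (b:ℝ)^2*w := mul_le_mul_of_nonneg_left hw1 hβ0.le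
        have h13 : S - s ≤ 1 := by linarith
        have h14 : 0 ≤ S + s := by linarith
        have h15 : (S - s) * (S + s) ≤ 1 * (S + s) := mul_le_mul_of_nonneg_right h13 h14
        nlinarith [hrb2, hS_ub, hsS, hB1]
      have h9 : (⌊s⌋₊:ℝ) + 1 ≤ (⌊S⌋₊:ℝ) := by
        have h10 : ((⌊s⌋₊ + 1 : ℕ):ℝ) ≤ S := by
          push_cast
          have : (⌊s⌋₊:ℝ) ≤ s := Nat.floor_le hs0
          linarith
        have := Nat.le_floor h10
        exact_mod_cast this
      exact_mod_cast h9
  -- final chain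
  have hSs : (t + (b:ℝ)^2*(y₁ + w) - ψh) - (t + (b:ℝ)^2*(y₁ - w) + ψh) ≤ (S - s) * (3*(b:ℝ)) := by
    have h8 : (t + (b:ℝ)^2*(y₁ + w) - ψh) - (t + (b:ℝ)^2*(y₁ - w) + ψh) = (S - s) * (S + s) := by
      linear_combination hs2 - hS2
    have h14 : S + s ≤ 3*(b:ℝ) := by linarith
    have h15 : (S - s) * (S + s) ≤ (S - s) * (3*(b:ℝ)) :=
      mul_le_mul_of_nonneg_left h14 (by linarith)
    linarith
  have hcard2 : r*(b:ℝ)/2 ≤ ((Finset.Icc (⌊s⌋₊ + 1) ⌊S⌋₊).card : ℝ) := by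
    obtain ⟨C, hC⟩ : ∃ C : ℝ, ((Finset.Icc (⌊s⌋₊ + 1) ⌊S⌋₊).card : ℝ) = C := ⟨_, rfl⟩
    rw [hC] at hcard ⊢
    have h12 : (b:ℝ)^2*(5/6*r) ≤ (b:ℝ)^2*w := mul_le_mul_of_nonneg_left hw1 hβ0.le
    have h16 : (3*(b:ℝ))*(S - s - 1) ≤ (3*(b:ℝ))*C :=
      mul_le_mul_of_nonneg_left hcard (by positivity)
    have h17 : (3*(b:ℝ))*(r*(b:ℝ)/2) ≤ (3*(b:ℝ))*C := by
      clear hmem hdisj hvol hbig hC hcard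
      linarith only [hSs, h16, h12, hrb2, hψ1, hψ0, hB1]
    exact le_of_mul_le_mul_left h17 (by positivity)
  calc ENNReal.ofReal (r*ψh/(b:ℝ))
      ≤ ENNReal.ofReal ((r*(b:ℝ)/2) * (2*ψh/(b:ℝ)^2)) := by
        apply ENNReal.ofReal_le_ofReal
        apply le_of_eq
        field_simp
    _ ≤ ENNReal.ofReal (((Finset.Icc (⌊s⌋₊ + 1) ⌊S⌋₊).card : ℝ) * (2*ψh/(b:ℝ)^2)) := by
        apply ENNReal.ofReal_le_ofReal
        exact mul_le_mul_of_nonneg_right hcard2 (by positivity)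
    _ = ((Finset.Icc (⌊s⌋₊ + 1) ⌊S⌋₊).card : ℝ≥0∞) * ENNReal.ofReal (2*ψh/(b:ℝ)^2) := by
        rw [← ENNReal.ofReal_natCast, ← ENNReal.ofReal_mul (Nat.cast_nonneg _)]
    _ = ∑ c ∈ Finset.Icc (⌊s⌋₊ + 1) ⌊S⌋₊, volume
          (Ioo (((c:ℝ)^2 - t - ψh)/(b:ℝ)^2) (((c:ℝ)^2 - t + ψh)/(b:ℝ)^2)) := by
        rw [Finset.sum_congr rfl (fun c _ => hvol c), Finset.sum_const, nsmul_eq_mul]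
    _ = volume (⋃ c ∈ Finset.Icc (⌊s⌋₊ + 1) ⌊S⌋₊,
          Ioo (((c:ℝ)^2 - t - ψh)/(b:ℝ)^2) (((c:ℝ)^2 - t + ψh)/(b:ℝ)^2)) := hbig.symm
    _ ≤ volume ((⋃ c : ℕ, Ioo (((c:ℝ)^2 - t - ψh)/(b:ℝ)^2) (((c:ℝ)^2 - t + ψh)/(b:ℝ)^2))
          ∩ Ioo (y₁ - w) (y₁ + w)) := measure_mono (iUnion₂_subset hmem)

def S2 (ψ : ℝ → ℝ) (a b : ℕ) : Set (ℝ × ℝ) :=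
  {z | z.1 ∈ Icc (0:ℝ) 1 ∧ z.2 ∈ Icc (0:ℝ) 1 ∧
    ∃ c : ℕ, |(a:ℝ)^2 * z.1 + (b:ℝ)^2 * z.2 - (c:ℝ)^2| < ψ ((max a b : ℕ) : ℝ)}

def D2 (x₁ y₁ r : ℝ) : Set (ℝ × ℝ) := {z | (z.1 - x₁)^2 + (z.2 - y₁)^2 < r^2}

lemma measurableSet_S2 (ψ : ℝ → ℝ) (a b : ℕ) : MeasurableSet (S2 ψ a b) := by
  have h1 : S2 ψ a b = (Prod.fst ⁻¹' Icc (0:ℝ) 1) ∩ ((Prod.snd ⁻¹' Icc (0:ℝ) 1) ∩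
      ⋃ c : ℕ, {z : ℝ × ℝ | |(a:ℝ)^2 * z.1 + (b:ℝ)^2 * z.2 - (c:ℝ)^2| < ψ ((max a b : ℕ) : ℝ)}) := by
    ext z
    simp only [S2, mem_setOf_eq, mem_inter_iff, mem_preimage, mem_iUnion]
  rw [h1]
  refine (measurable_fst measurableSet_Icc).inter ((measurable_snd measurableSet_Icc).inter
    (MeasurableSet.iUnion fun c => ?_))
  exact measurableSet_lt (by fun_prop) measurable_const

lemma measurableSet_D2 (x₁ y₁ r : ℝ) : MeasurableSet (D2 x₁ y₁ r) :=
  measurableSet_lt (by fun_prop) measurable_const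

lemma endpoint_bounds {ε c r : ℝ} (hr : 0 < r)
    (h : ∀ z : ℝ, (z - c)^2 < r^2 → ε ≤ z ∧ z ≤ 1) : ε ≤ c - r ∧ c + r ≤ 1 := by
  have hc := h c (by nlinarith)
  constructor
  · by_contra h1
    push_neg at h1
    have h2 := h ((c - r + ε)/2) (by nlinarith [hc.1])
    linarith [h2.1]
  · by_contra h1
    push_neg at h1
    have h2 := h ((c + r + 1)/2) (by nlinarith [hc.2])
    linarith [h2.2]

lemma core (ε : ℝ) (hε0 : 0 < ε) (hε1 : ε < 1) (ψ : ℝ → ℝ)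
    (hψpos : ∀ x : ℝ, 0 < x → 0 < ψ x) (X : ℝ) (hX : ∀ x : ℝ, X ≤ x → ψ x ≤ 1)
    (x₁ y₁ r : ℝ) (hr : 0 < r)
    (hD : D2 x₁ y₁ r ⊆ Icc ε 1 ×ˢ Icc ε 1) :
    ∃ H₀ : ℕ, ∀ a b : ℕ, a ≤ b → H₀ ≤ b →
      ENNReal.ofReal (1/5 * ψ (b:ℝ) / (b:ℝ)) * volume (D2 x₁ y₁ r) ≤
          volume (S2 ψ a b ∩ D2 x₁ y₁ r) ∧
        volume (S2 ψ a b ∩ D2 x₁ y₁ r) ≤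
          ENNReal.ofReal (9/ε * ψ (b:ℝ) / (b:ℝ)) * volume (D2 x₁ y₁ r) := by
  have hxb : ε ≤ x₁ - r ∧ x₁ + r ≤ 1 := endpoint_bounds hr (fun z hz => by
    have hm := hD (show (z, y₁) ∈ D2 x₁ y₁ r by simp only [D2, mem_setOf_eq]; nlinarith)
    exact ⟨hm.1.1, hm.1.2⟩)
  have hyb : ε ≤ y₁ - r ∧ y₁ + r ≤ 1 := endpoint_bounds hr (fun z hz => by
    have hm := hD (show (x₁, z) ∈ D2 x₁ y₁ r by simp only [D2, mem_setOf_eq]; nlinarith)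
    exact ⟨hm.2.1, hm.2.2⟩)
  have hr2 : r ≤ 1/2 := by linarith [hxb.1, hxb.2]
  refine ⟨⌈X⌉₊ + ⌈36/r⌉₊ + ⌈2/(ε*r)⌉₊ + 1, fun a b hab hbH => ?_⟩
  have hb1 : 1 ≤ b := by omega
  have hbR : (0:ℝ) < (b:ℝ) := by exact_mod_cast hb1
  have hXb : X ≤ (b:ℝ) := le_trans (Nat.le_ceil X) (Nat.cast_le.2 (by omega))
  have hb36 : 36/r ≤ (b:ℝ) := le_trans (Nat.le_ceil _) (Nat.cast_le.2 (by omega))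
  have hbεr' : 2/(ε*r) ≤ (b:ℝ) := le_trans (Nat.le_ceil _) (Nat.cast_le.2 (by omega))
  have hbεr : 2 ≤ (b:ℝ)*ε*r := by
    rw [div_le_iff₀ (by positivity)] at hbεr'
    nlinarith
  have hψ0 : 0 < ψ (b:ℝ) := hψpos _ hbR
  have hψ1 : ψ (b:ℝ) ≤ 1 := hX _ hXb
  have hmax : ((max a b : ℕ):ℝ) = (b:ℝ) := by rw [max_eq_right hab]
  have hIm : MeasurableSet (S2 ψ a b ∩ D2 x₁ y₁ r) :=
    (measurableSet_S2 ψ a b).inter (measurableSet_D2 x₁ y₁ r)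
  have hprod : volume (S2 ψ a b ∩ D2 x₁ y₁ r)
      = ∫⁻ x : ℝ, volume (Prod.mk x ⁻¹' (S2 ψ a b ∩ D2 x₁ y₁ r)) := by
    rw [Measure.volume_eq_prod, Measure.prod_apply hIm]
  have haR : (a:ℝ) ≤ (b:ℝ) := Nat.cast_le.2 hab
  have haR0 : (0:ℝ) ≤ (a:ℝ) := Nat.cast_nonneg a
  have hD_ub : volume (D2 x₁ y₁ r) ≤ ENNReal.ofReal ((2*r)*(2*r)) := by
    have hsub : D2 x₁ y₁ r ⊆ Ioo (x₁-r) (x₁+r) ×ˢ Ioo (y₁-r) (y₁+r) := by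
      rintro ⟨zx, zy⟩ hz
      simp only [D2, mem_setOf_eq] at hz
      refine ⟨⟨?_, ?_⟩, ⟨?_, ?_⟩⟩ <;> nlinarith
    refine le_trans (measure_mono hsub) ?_
    rw [Measure.volume_eq_prod, Measure.prod_prod, Real.volume_Ioo, Real.volume_Ioo,
        ← ENNReal.ofReal_mul (by linarith)]
    exact le_of_eq (by congr 1; ring)
  have hD_lb : ENNReal.ofReal ((7/5*r)*(7/5*r)) ≤ volume (D2 x₁ y₁ r) := by
    have hsub : Ioo (x₁-7/10*r) (x₁+7/10*r) ×ˢ Ioo (y₁-7/10*r) (y₁+7/10*r) ⊆ D2 x₁ y₁ r := by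
      rintro ⟨zx, zy⟩ ⟨hzx, hzy⟩
      simp only [mem_Ioo] at hzx hzy
      simp only [D2, mem_setOf_eq]
      nlinarith [hzx.1, hzx.2, hzy.1, hzy.2]
    refine le_trans ?_ (measure_mono hsub)
    rw [Measure.volume_eq_prod, Measure.prod_prod, Real.volume_Ioo, Real.volume_Ioo,
        ← ENNReal.ofReal_mul (by linarith)]
    exact le_of_eq (by congr 1; ring)
  constructor
  · -- LOWER BOUND
    have hslice : ∀ x : ℝ, (Icc (x₁ - r/2) (x₁ + r/2)).indicator
        (fun _ => ENNReal.ofReal (r * ψ (b:ℝ) / (b:ℝ))) x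
          ≤ volume (Prod.mk x ⁻¹' (S2 ψ a b ∩ D2 x₁ y₁ r)) := by
      intro x
      by_cases hx : x ∈ Icc (x₁ - r/2) (x₁ + r/2)
      · rw [indicator_of_mem hx]
        obtain ⟨hx1, hx2⟩ := hx
        have hw0 : 0 ≤ r^2 - (x - x₁)^2 := by nlinarith
        obtain ⟨w, hw⟩ : ∃ w : ℝ, Real.sqrt (r^2 - (x-x₁)^2) = w := ⟨_, rfl⟩
        have hw2' : w^2 = r^2 - (x-x₁)^2 := by rw [← hw]; exact Real.sq_sqrt hw0
        have hwnn : 0 ≤ w := by rw [← hw]; exact Real.sqrt_nonneg _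
        have hw1 : 5/6*r ≤ w := by
          rw [← hw, Real.le_sqrt (by positivity) hw0]
          nlinarith
        have hwr : w ≤ r := by nlinarith
        have hx0 : ε ≤ x := by linarith [hxb.1]
        have hx1' : x ≤ 1 := by linarith [hxb.2]
        have ht0 : 0 ≤ (a:ℝ)^2 * x := mul_nonneg (by positivity) (by linarith)
        have htb : (a:ℝ)^2 * x ≤ (b:ℝ)^2 := by nlinarith
        refine le_trans (oneD_lower b ε ((a:ℝ)^2*x) (ψ (b:ℝ)) y₁ r w hε0 hε1.le ht0 htb
          hψ0 hψ1 hw1 hwr (by linarith [hyb.1]) (by linarith [hyb.2]) hr hb36)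
          (measure_mono ?_)
        rintro y ⟨hyJ, hyI⟩
        obtain ⟨hyl, hyr⟩ := mem_Ioo.1 hyI
        have hxyD : (x, y) ∈ D2 x₁ y₁ r := by
          simp only [D2, mem_setOf_eq]
          nlinarith
        have hsq := hD hxyD
        obtain ⟨c, hc⟩ := mem_iUnion.1 hyJ
        refine ⟨⟨⟨by linarith [hsq.1.1], hsq.1.2⟩, ⟨by linarith [hsq.2.1], hsq.2.2⟩, c, ?_⟩, hxyD⟩
        rw [hmax]
        exact (mem_J_iff' (by positivity)).2 hc
      · rw [indicator_of_notMem hx]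
        exact zero_le
    calc ENNReal.ofReal (1/5 * ψ (b:ℝ) / (b:ℝ)) * volume (D2 x₁ y₁ r)
        ≤ ENNReal.ofReal (1/5 * ψ (b:ℝ) / (b:ℝ)) * ENNReal.ofReal ((2*r)*(2*r)) :=
          mul_le_mul_right hD_ub _
      _ ≤ ENNReal.ofReal (r * ψ (b:ℝ) / (b:ℝ)) * ENNReal.ofReal r := by
          rw [← ENNReal.ofReal_mul (by positivity), ← ENNReal.ofReal_mul (by positivity)]
          apply ENNReal.ofReal_le_ofReal
          have h1 : 1/5 * ψ (b:ℝ) / (b:ℝ) * ((2*r)*(2*r)) = (4/5 * r^2 * ψ (b:ℝ)) / (b:ℝ) := by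
            ring
          have h2 : r * ψ (b:ℝ) / (b:ℝ) * r = (r^2 * ψ (b:ℝ)) / (b:ℝ) := by ring
          rw [h1, h2]
          gcongr
          nlinarith
      _ = ENNReal.ofReal (r * ψ (b:ℝ) / (b:ℝ)) * volume (Icc (x₁ - r/2) (x₁ + r/2)) := by
          rw [Real.volume_Icc]
          congr 2
          ring
      _ = ∫⁻ x : ℝ, (Icc (x₁ - r/2) (x₁ + r/2)).indicator
            (fun _ => ENNReal.ofReal (r * ψ (b:ℝ) / (b:ℝ))) x :=
          (lintegral_indicator_const measurableSet_Icc _).symm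
      _ ≤ ∫⁻ x : ℝ, volume (Prod.mk x ⁻¹' (S2 ψ a b ∩ D2 x₁ y₁ r)) := lintegral_mono hslice
      _ = volume (S2 ψ a b ∩ D2 x₁ y₁ r) := hprod.symm
  · -- UPPER BOUND
    have hslice : ∀ x : ℝ, volume (Prod.mk x ⁻¹' (S2 ψ a b ∩ D2 x₁ y₁ r)) ≤
        (Ioo (x₁ - r) (x₁ + r)).indicator
          (fun _ => ENNReal.ofReal (8*r*ψ (b:ℝ)/(ε*(b:ℝ)))) x := by
      intro x
      by_cases hx : x ∈ Ioo (x₁ - r) (x₁ + r)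
      · rw [indicator_of_mem hx]
        obtain ⟨hx1, hx2⟩ := hx
        have hx0 : ε ≤ x := by linarith [hxb.1]
        have ht0 : 0 ≤ (a:ℝ)^2 * x := mul_nonneg (by positivity) (by linarith)
        refine le_trans (measure_mono ?_) (oneD_upper b ε ((a:ℝ)^2*x) (ψ (b:ℝ)) y₁ r hε0 hε1.le
          ht0 hψ0 hψ1 hyb.1 hr hr2 (by nlinarith) hb36)
        rintro y ⟨⟨hx01, hy01, c, habs⟩, hyD⟩
        simp only [D2, mem_setOf_eq] at hyD
        constructor
        · rw [hmax] at habs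
          exact mem_iUnion.2 ⟨c, (mem_J_iff' (by positivity)).1 habs⟩
        · exact ⟨by nlinarith, by nlinarith⟩
      · rw [indicator_of_notMem hx]
        have hemp : Prod.mk x ⁻¹' (S2 ψ a b ∩ D2 x₁ y₁ r) = ∅ := by
          rw [eq_empty_iff_forall_notMem]
          rintro y ⟨_, hyD⟩
          simp only [D2, mem_setOf_eq] at hyD
          rw [mem_Ioo] at hx
          push_neg at hx
          rcases lt_or_ge (x₁ - r) x with h | h
          · have := hx h
            nlinarith
          · nlinarith
        rw [hemp, measure_empty]
    calc volume (S2 ψ a b ∩ D2 x₁ y₁ r)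
        = ∫⁻ x : ℝ, volume (Prod.mk x ⁻¹' (S2 ψ a b ∩ D2 x₁ y₁ r)) := hprod
      _ ≤ ∫⁻ x : ℝ, (Ioo (x₁ - r) (x₁ + r)).indicator
            (fun _ => ENNReal.ofReal (8*r*ψ (b:ℝ)/(ε*(b:ℝ)))) x := lintegral_mono hslice
      _ = ENNReal.ofReal (8*r*ψ (b:ℝ)/(ε*(b:ℝ))) * volume (Ioo (x₁-r) (x₁+r)) :=
          lintegral_indicator_const measurableSet_Ioo _
      _ = ENNReal.ofReal (8*r*ψ (b:ℝ)/(ε*(b:ℝ))) * ENNReal.ofReal (2*r) := by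
          rw [Real.volume_Ioo]
          congr 2
          ring
      _ ≤ ENNReal.ofReal (9/ε * ψ (b:ℝ) / (b:ℝ)) * ENNReal.ofReal ((7/5*r)*(7/5*r)) := by
          rw [← ENNReal.ofReal_mul (by positivity), ← ENNReal.ofReal_mul (by positivity)]
          apply ENNReal.ofReal_le_ofReal
          have h1 : 8*r*ψ (b:ℝ)/(ε*(b:ℝ)) * (2*r) = (16 * r^2 * ψ (b:ℝ)) / (ε*(b:ℝ)) := by ring
          have h2 : 9/ε * ψ (b:ℝ) / (b:ℝ) * ((7/5*r)*(7/5*r))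
              = (441/25 * r^2 * ψ (b:ℝ)) / (ε*(b:ℝ)) := by ring
          rw [h1, h2]
          gcongr
          nlinarith
      _ ≤ ENNReal.ofReal (9/ε * ψ (b:ℝ) / (b:ℝ)) * volume (D2 x₁ y₁ r) :=
          mul_le_mul_right hD_lb _

noncomputable def Feq : EuclideanSpace ℝ (Fin 2) ≃ᵐ ℝ × ℝ :=
  (MeasurableEquiv.toLp 2 (Fin 2 → ℝ)).symm.trans (MeasurableEquiv.finTwoArrow)

lemma Feq_mp : MeasurePreserving Feq volume volume :=
  (volume_preserving_finTwoArrow ℝ).comp (EuclideanSpace.volume_preserving_symm_measurableEquiv_toLp (Fin 2))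

lemma swap_mp : MeasurePreserving (Prod.swap : ℝ×ℝ → ℝ×ℝ) volume volume := by
  rw [show (volume : Measure (ℝ×ℝ)) = (volume : Measure ℝ).prod volume from
    Measure.volume_eq_prod ℝ ℝ]
  exact Measure.measurePreserving_swap

lemma ball_eq_preimage (x₀ : EuclideanSpace ℝ (Fin 2)) (r : ℝ) (hr : 0 < r) :
    Metric.ball x₀ r = Feq ⁻¹' D2 (x₀ 0) (x₀ 1) r := by
  ext p
  rw [mem_preimage, Metric.mem_ball, EuclideanSpace.dist_eq, Fin.sum_univ_two, Real.sqrt_lt' hr]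
  simp only [Real.dist_eq, sq_abs]
  exact Iff.rfl

lemma sig_eq_preimage (ψ : ℝ → ℝ) (a b : ℕ) : sigU ψ a b = Feq ⁻¹' S2 ψ a b := by
  ext p
  simp only [sigU, sigC, mem_iUnion, mem_preimage, S2, mem_setOf_eq]
  constructor
  · rintro ⟨c, h1, h2, h3⟩; exact ⟨h1, h2, c, h3⟩
  · rintro ⟨h1, h2, c, h3⟩; exact ⟨c, h1, h2, h3⟩

lemma swap_preimage (ψ : ℝ → ℝ) (a b : ℕ) (x₁ y₁ r : ℝ) :
    Prod.swap ⁻¹' (S2 ψ b a ∩ D2 y₁ x₁ r) = S2 ψ a b ∩ D2 x₁ y₁ r := by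
  ext z
  simp only [mem_preimage, mem_inter_iff, S2, D2, mem_setOf_eq, Prod.fst_swap, Prod.snd_swap]
  constructor
  · rintro ⟨⟨h1, h2, c, h3⟩, h4⟩
    refine ⟨⟨h2, h1, c, ?_⟩, by linarith⟩
    rw [max_comm b a, add_comm ((b:ℝ)^2 * z.2) ((a:ℝ)^2 * z.1)] at h3
    exact h3
  · rintro ⟨⟨h1, h2, c, h3⟩, h4⟩
    refine ⟨⟨h2, h1, c, ?_⟩, by linarith⟩
    rw [max_comm a b, add_comm ((a:ℝ)^2 * z.1) ((b:ℝ)^2 * z.2)] at h3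
    exact h3

/-- **The measure of `σ_{a,b} ∩ B`.** Fix `ε ∈ (0,1)`. There are constants `c₁, c₂ > 0`
depending only on `ε` such that for every monotonic `ψ : ℝ⁺ → ℝ⁺` with `ψ(h) → 0`, every
ball `B ⊆ [ε,1]²` and all `(a,b)` with `a + b > 0` and `h_{a,b}` sufficiently large,
`c₁ |B| ψ(h_{a,b})/h_{a,b} ≤ |σ_{a,b} ∩ B| ≤ c₂ |B| ψ(h_{a,b})/h_{a,b}`. -/
theorem volume_sigU_inter_ball
    (ε : ℝ) (hε : ε ∈ Set.Ioo (0 : ℝ) 1) :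
    ∃ c₁ c₂ : ℝ, 0 < c₁ ∧ 0 < c₂ ∧
      ∀ ψ : ℝ → ℝ,
        (∀ x : ℝ, 0 < x → 0 < ψ x) →
        AntitoneOn ψ (Set.Ioi 0) →
        Tendsto ψ atTop (nhds 0) →
        ∀ (x₀ : EuclideanSpace ℝ (Fin 2)) (r : ℝ), 0 < r →
          Metric.ball x₀ r ⊆ unitSq ε →
          ∃ H₀ : ℕ, ∀ a b : ℕ, 0 < a + b → H₀ ≤ max a b →
            ENNReal.ofReal (c₁ * ψ ((max a b : ℕ) : ℝ) / ((max a b : ℕ) : ℝ)) *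
                volume (Metric.ball x₀ r) ≤
              volume (sigU ψ a b ∩ Metric.ball x₀ r) ∧
            volume (sigU ψ a b ∩ Metric.ball x₀ r) ≤
              ENNReal.ofReal (c₂ * ψ ((max a b : ℕ) : ℝ) / ((max a b : ℕ) : ℝ)) *
                volume (Metric.ball x₀ r) := by
  obtain ⟨hε0, hε1⟩ := hε
  refine ⟨1/5, 9/ε, by norm_num, by positivity, ?_⟩
  intro ψ hψpos _hmono hten x₀ r hr hB
  obtain ⟨X, hX⟩ := mem_atTop_sets.1 (hten (Iio_mem_nhds (by norm_num : (0:ℝ) < 1)))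
  have hX' : ∀ x : ℝ, X ≤ x → ψ x ≤ 1 := fun x hx => le_of_lt (hX x hx)
  have hball : Metric.ball x₀ r = Feq ⁻¹' D2 (x₀ 0) (x₀ 1) r := ball_eq_preimage x₀ r hr
  have hD1 : D2 (x₀ 0) (x₀ 1) r ⊆ Icc ε 1 ×ˢ Icc ε 1 := by
    rintro z hz
    obtain ⟨p, rfl⟩ := Feq.surjective z
    have hp : p ∈ Metric.ball x₀ r := by rw [hball]; exact hz
    have hu := hB hp
    exact Set.mem_prod.2 ⟨hu.1, hu.2⟩
  have hD2' : D2 (x₀ 1) (x₀ 0) r ⊆ Icc ε 1 ×ˢ Icc ε 1 := by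
    rintro z hz
    have hz' : Prod.swap z ∈ D2 (x₀ 0) (x₀ 1) r := by
      simp only [D2, mem_setOf_eq, Prod.fst_swap, Prod.snd_swap] at hz ⊢
      linarith
    have hm := hD1 hz'
    exact Set.mem_prod.2 ⟨(Set.mem_prod.1 hm).2, (Set.mem_prod.1 hm).1⟩
  obtain ⟨H₁, hcore1⟩ := core ε hε0 hε1 ψ hψpos X hX' (x₀ 0) (x₀ 1) r hr hD1
  obtain ⟨H₂, hcore2⟩ := core ε hε0 hε1 ψ hψpos X hX' (x₀ 1) (x₀ 0) r hr hD2'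
  refine ⟨max H₁ H₂, fun a b _hab0 hH => ?_⟩
  have hvol_ball : volume (Metric.ball x₀ r) = volume (D2 (x₀ 0) (x₀ 1) r) := by
    rw [hball]
    exact Feq_mp.measure_preimage (measurableSet_D2 _ _ _).nullMeasurableSet
  have hvol_int : volume (sigU ψ a b ∩ Metric.ball x₀ r)
      = volume (S2 ψ a b ∩ D2 (x₀ 0) (x₀ 1) r) := by
    rw [hball, sig_eq_preimage, ← preimage_inter]
    exact Feq_mp.measure_preimage
      ((measurableSet_S2 ψ a b).inter (measurableSet_D2 _ _ _)).nullMeasurableSet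
  rcases le_total a b with h | h
  · have hmaxeq : max a b = b := max_eq_right h
    have hb : H₁ ≤ b := by rw [hmaxeq] at hH; omega
    obtain ⟨hL, hU⟩ := hcore1 a b h hb
    rw [hvol_int, hvol_ball, hmaxeq]
    exact ⟨hL, hU⟩
  · have hmaxeq : max a b = a := max_eq_left h
    have ha : H₂ ≤ a := by rw [hmaxeq] at hH; omega
    obtain ⟨hL, hU⟩ := hcore2 b a h ha
    have hsv : volume (S2 ψ b a ∩ D2 (x₀ 1) (x₀ 0) r)
        = volume (S2 ψ a b ∩ D2 (x₀ 0) (x₀ 1) r) := by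
      rw [← swap_preimage ψ a b (x₀ 0) (x₀ 1) r]
      exact (swap_mp.measure_preimage
        (((measurableSet_S2 ψ b a).inter (measurableSet_D2 _ _ _))).nullMeasurableSet).symm
    have hswD : Prod.swap ⁻¹' (D2 (x₀ 1) (x₀ 0) r) = D2 (x₀ 0) (x₀ 1) r := by
      ext z
      simp only [mem_preimage, D2, mem_setOf_eq, Prod.fst_swap, Prod.snd_swap]
      constructor <;> intro <;> linarith
    have hdv : volume (D2 (x₀ 1) (x₀ 0) r) = volume (D2 (x₀ 0) (x₀ 1) r) := by
      have h2 := swap_mp.measure_preimage (measurableSet_D2 (x₀ 1) (x₀ 0) r).nullMeasurableSet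
      rw [hswD] at h2
      exact h2.symm
    rw [hvol_int, hvol_ball, hmaxeq, ← hsv, ← hdv]
    exact ⟨hL, hU⟩
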